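/- Let V be a vector space of finite dimension n over a field K equipped with a nondegenerate symmetric bilinear form ⟨·,·⟩, and let ξ, η, α be subspaces with ξ ⊥ η (i.e. ξ ⊆ η^⊥). Then [dim((η^⊥ ∩ α) + ξ) − dim ξ] + [dim((ξ^⊥ ∩ α^⊥) + η) − dim η] = n − dim η − dim ξ. -/

import Mathlib

open Module

lemma orth_sup_aux {K V : Type*} [Field K] [AddCommGroup V] [Module K V]
    (B : LinearMap.BilinForm K V) (U W : Submodule K V) :
    B.orthogonal (U ⊔ W) = B.orthogonal U ⊓ B.orthogonal W := by
  ext x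
  simp only [Submodule.mem_inf, LinearMap.BilinForm.mem_orthogonal_iff]
  constructor
  · intro hx
    exact ⟨fun n hn => hx n (Submodule.mem_sup_left hn),
      fun n hn => hx n (Submodule.mem_sup_right hn)⟩
  · rintro ⟨h1, h2⟩ n hn
    rcases Submodule.mem_sup.1 hn with ⟨y, hy, z, hz, rfl⟩
    have := h1 y hy
    have := h2 z hz
    simp [LinearMap.add_apply, *]

lemma orth_inf_aux {K V : Type*} [Field K] [AddCommGroup V] [Module K V]
    [FiniteDimensional K V]
    (B : LinearMap.BilinForm K V) (hB : B.Nondegenerate) (hB₀ : B.IsRefl)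
    (U W : Submodule K V) :
    B.orthogonal (B.orthogonal U ⊓ B.orthogonal W) = U ⊔ W := by
  rw [← orth_sup_aux, LinearMap.BilinForm.orthogonal_orthogonal hB hB₀]

/-- In an `n`-dimensional nondegenerate orthogonal space `(V, ⟨·,·⟩)` with
subspaces `ξ ⊥ η` and any subspace `α`:
`[dim((η^⊥ ∩ α) + ξ) − dim ξ] + [dim((ξ^⊥ ∩ α^⊥) + η) − dim η] = n − dim η − dim ξ`. -/
theorem cleaning_identity_orthogonal_space {K V : Type*} [Field K] [AddCommGroup V]
    [Module K V] [FiniteDimensional K V]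
    (B : LinearMap.BilinForm K V) (hB : B.Nondegenerate)
    (hsymm : ∀ x y : V, B x y = B y x)
    (ξ η α : Submodule K V) (h : ξ ≤ B.orthogonal η) :
    ((finrank K ((B.orthogonal η ⊓ α) ⊔ ξ : Submodule K V) : ℤ) - finrank K ξ)
        + ((finrank K ((B.orthogonal ξ ⊓ B.orthogonal α) ⊔ η : Submodule K V) : ℤ)
            - finrank K η)
      = (finrank K V : ℤ) - finrank K η - finrank K ξ := by
  have hB₀ : B.IsRefl := fun x y hxy => by rw [hsymm]; exact hxy
  have hηξ : η ≤ B.orthogonal ξ := fun y hy x hx => hB₀ y x (h hx y hy)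
  have key : B.orthogonal ((B.orthogonal η ⊓ α) ⊔ ξ)
      = (B.orthogonal ξ ⊓ B.orthogonal α) ⊔ η := by
    rw [orth_sup_aux]
    have h1 : B.orthogonal (B.orthogonal η ⊓ α) = η ⊔ B.orthogonal α := by
      have := orth_inf_aux B hB hB₀ η (B.orthogonal α)
      rwa [LinearMap.BilinForm.orthogonal_orthogonal hB hB₀ α] at this
    rw [h1, sup_inf_assoc_of_le _ hηξ, sup_comm, inf_comm (B.orthogonal α)]
  have hdim := LinearMap.BilinForm.finrank_orthogonal hB
      ((B.orthogonal η ⊓ α) ⊔ ξ)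
  rw [key] at hdim
  have h1 : finrank K ξ ≤ finrank K ((B.orthogonal η ⊓ α) ⊔ ξ : Submodule K V) :=
    Submodule.finrank_mono le_sup_right
  have h2 : finrank K η
      ≤ finrank K ((B.orthogonal ξ ⊓ B.orthogonal α) ⊔ η : Submodule K V) :=
    Submodule.finrank_mono le_sup_right
  have h3 : finrank K ((B.orthogonal η ⊓ α) ⊔ ξ : Submodule K V) ≤ finrank K V :=
    Submodule.finrank_le _
  omega
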